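/- Let κ, κ₀ ≥ 1. Let H and B be symmetric positive definite 2×2 real matrices such that κ^{-1}|v|² ≤ (Hv)·v ≤ κ|v|² for all v ∈ ℝ², det B = 1, and κ₀^{-1}|v|² ≤ (Bv)·v ≤ κ₀|v|² for all v ∈ ℝ². Then for all ξ₁, ξ₂ ∈ ℝ²: Σ_{k,i=1}^{2} (det H)^{1/2} (H^{-1})_{ki} ( B² ξ_i )·ξ_k ≥ κ^{-2} κ₀^{-2} ( |ξ₁|² + |ξ₂|² ). -/

import Mathlib

open Matrix

noncomputable section

abbrev V2 : Type := Fin 2 → ℝ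
abbrev M2 : Type := Matrix (Fin 2) (Fin 2) ℝ

def Jmat : M2 := !![0, -1; 1, 0]

def Umat : M2 := !![1, 0; 0, -1]

def det2 (a b : V2) : ℝ := a 0 * b 1 - a 1 * b 0

noncomputable def gradv (f : V2 → ℝ) (x : V2) : V2 :=
  fun i => fderiv ℝ f x (Pi.single i 1)

noncomputable def divv (W : V2 → V2) (x : V2) : ℝ :=
  ∑ i, fderiv ℝ (fun y => W y i) x (Pi.single i 1)

noncomputable def divOp (γ : V2 → M2) (u : V2 → ℝ) (x : V2) : ℝ :=
  divv (fun y => γ y *ᵥ gradv u y) x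

noncomputable def Svec (A : V2 → M2) (u : V2 → ℝ) (x : V2) : V2 :=
  A x *ᵥ gradv u x

noncomputable def Atil (A : V2 → M2) (x : V2) : M2 :=
  (Real.sqrt (A x).det)⁻¹ • A x

noncomputable def Hmat (A : V2 → M2) (u : Fin 2 → V2 → ℝ) (x : V2) : M2 :=
  Matrix.of fun i j => Svec A (u i) x ⬝ᵥ Svec A (u j) x

noncomputable def Smat (A : V2 → M2) (u : Fin 2 → V2 → ℝ) (x : V2) : M2 :=
  Matrix.of fun i j => Svec A (u j) x i

noncomputable def Vf (T : V2 → M2) (i j : Fin 2) (x : V2) : V2 :=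
  ∑ k, ((T x)⁻¹ k j) • gradv (fun y => T y i k) x

noncomputable def lieB (U W : V2 → V2) (x : V2) : V2 :=
  fun j => (∑ i, U x i * fderiv ℝ (fun y => W y j) x (Pi.single i 1))
         - (∑ i, W x i * fderiv ℝ (fun y => U y j) x (Pi.single i 1))

def colf (B : V2 → M2) (j : Fin 2) : V2 → V2 := fun x i => B x i j

noncomputable def Nvec (A : V2 → M2) (u : Fin 2 → V2 → ℝ) (x : V2) : V2 :=
  (1/2 : ℝ) • gradv (fun y => Real.log (Hmat A u y).det) x

noncomputable def unitv (v : V2) : V2 := (Real.sqrt (v ⬝ᵥ v))⁻¹ • v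

noncomputable def Mparam (a b : ℝ) : M2 := !![a, b; b, (1 + b^2)/a]

noncomputable def Rcol (A : V2 → M2) (u : Fin 2 → V2 → ℝ) (T : V2 → M2) (i : Fin 2) (x : V2) : V2 :=
  fun j => (Smat A u x * (T x)ᵀ) j i

noncomputable def Rot (t : ℝ) : M2 := !![Real.cos t, -Real.sin t; Real.sin t, Real.cos t]

set_option maxHeartbeats 1000000 in
theorem stmt18 (κ κ₀ : ℝ) (hκ : 1 ≤ κ) (hκ₀ : 1 ≤ κ₀)
    (H B : M2) (hH : H.PosDef) (hB : B.PosDef) (hBdet : B.det = 1)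
    (hHb : ∀ v : V2, κ⁻¹ * (v ⬝ᵥ v) ≤ (H *ᵥ v) ⬝ᵥ v ∧ (H *ᵥ v) ⬝ᵥ v ≤ κ * (v ⬝ᵥ v))
    (hBb : ∀ v : V2, κ₀⁻¹ * (v ⬝ᵥ v) ≤ (B *ᵥ v) ⬝ᵥ v ∧ (B *ᵥ v) ⬝ᵥ v ≤ κ₀ * (v ⬝ᵥ v))
    (ξ : Fin 2 → V2) :
    (κ⁻¹)^2 * (κ₀⁻¹)^2 * (ξ 0 ⬝ᵥ ξ 0 + ξ 1 ⬝ᵥ ξ 1)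
      ≤ ∑ k, ∑ i, Real.sqrt H.det * H⁻¹ k i * (((B * B) *ᵥ ξ i) ⬝ᵥ ξ k) := by
  have hκpos : (0:ℝ) < κ := lt_of_lt_of_le one_pos hκ
  have hκ₀pos : (0:ℝ) < κ₀ := lt_of_lt_of_le one_pos hκ₀
  have hκi : (0:ℝ) < κ⁻¹ := by positivity
  have hdotnn : ∀ v : V2, 0 ≤ v ⬝ᵥ v := by
    intro v
    simp [dotProduct, Fin.sum_univ_two]
    nlinarith [mul_self_nonneg (v 0), mul_self_nonneg (v 1)]
  have hHsym : H 1 0 = H 0 1 := by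
    have := hH.isHermitian.apply 0 1
    simpa using this
  have hBsym : B 1 0 = B 0 1 := by
    have := hB.isHermitian.apply 0 1
    simpa using this
  have hsymH : ∀ x y : V2, (H *ᵥ x) ⬝ᵥ y = x ⬝ᵥ (H *ᵥ y) := by
    intro x y
    simp [Matrix.mulVec, dotProduct, Fin.sum_univ_two, hHsym]
    ring
  have hsymB : ∀ x y : V2, (B *ᵥ x) ⬝ᵥ y = x ⬝ᵥ (B *ᵥ y) := by
    intro x y
    simp [Matrix.mulVec, dotProduct, Fin.sum_univ_two, hBsym]
    ring
  have hdet : H.det = H 0 0 * H 1 1 - H 0 1 * H 0 1 := by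
    rw [Matrix.det_fin_two, hHsym]
  have ha : κ⁻¹ ≤ H 0 0 := by
    have h := (hHb ![1, 0]).1
    simp [Matrix.mulVec, dotProduct, Fin.sum_univ_two] at h
    linarith
  have hc : κ⁻¹ ≤ H 1 1 := by
    have h := (hHb ![0, 1]).1
    simp [Matrix.mulVec, dotProduct, Fin.sum_univ_two] at h
    linarith
  have hdisc : discrim (H 1 1 - κ⁻¹) (2 * H 0 1) (H 0 0 - κ⁻¹) ≤ 0 := by
    apply discrim_le_zero
    intro t
    have h := (hHb ![1, t]).1
    simp [Matrix.mulVec, dotProduct, Fin.sum_univ_two, hHsym] at h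
    nlinarith [h]
  have hb2 : (2 * H 0 1) ^ 2 - 4 * (H 1 1 - κ⁻¹) * (H 0 0 - κ⁻¹) ≤ 0 := by
    have := hdisc
    rwa [discrim] at this
  have hdetlb : κ⁻¹ ^ 2 ≤ H.det := by
    rw [hdet]
    nlinarith [ha, hc, hb2, hκi]
  have hdpos : (0:ℝ) < H.det := hH.det_pos
  have hsq : κ⁻¹ ≤ Real.sqrt H.det := by
    rw [show κ⁻¹ = Real.sqrt (κ⁻¹ ^ 2) from (Real.sqrt_sq hκi.le).symm]
    exact Real.sqrt_le_sqrt hdetlb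
  have hHinv : ∀ v : V2, H *ᵥ (H⁻¹ *ᵥ v) = v := by
    intro v
    rw [Matrix.mulVec_mulVec, Matrix.mul_nonsing_inv _ (isUnit_iff_ne_zero.mpr hdpos.ne'),
      Matrix.one_mulVec]
  -- lower bound for the quadratic form of H⁻¹
  have hinvlb : ∀ v : V2, κ⁻¹ * (v ⬝ᵥ v) ≤ (H⁻¹ *ᵥ v) ⬝ᵥ v := by
    intro v
    by_cases hv : v = 0
    · subst hv; simp
    have hspos : 0 < v ⬝ᵥ v := by
      have hne : v 0 ≠ 0 ∨ v 1 ≠ 0 := by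
        by_contra hcon
        push_neg at hcon
        apply hv
        funext i
        fin_cases i <;> simp [hcon.1, hcon.2]
      simp [dotProduct, Fin.sum_univ_two]
      rcases hne with h | h <;>
        nlinarith [mul_self_nonneg (v 0), mul_self_nonneg (v 1), mul_self_pos.mpr h]
    set w := H⁻¹ *ᵥ v with hw
    have hHw : H *ᵥ w = v := hHinv v
    have hvw : (H *ᵥ v) ⬝ᵥ w = v ⬝ᵥ v := by rw [hsymH v w, hHw]
    have e : ∀ t : ℝ, (H *ᵥ (v + t • w)) ⬝ᵥ (v + t • w)
        = (v ⬝ᵥ w) * (t * t) + (2 * (v ⬝ᵥ v)) * t + (H *ᵥ v) ⬝ᵥ v := by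
      intro t
      have h1 : H *ᵥ (v + t • w) = H *ᵥ v + t • v := by
        rw [Matrix.mulVec_add, Matrix.mulVec_smul, hHw]
      rw [h1]
      simp only [add_dotProduct, dotProduct_add, smul_dotProduct,
        dotProduct_smul, smul_eq_mul, hvw, dotProduct_comm w v]
      ring
    have hq : ∀ t : ℝ, 0 ≤ (v ⬝ᵥ w) * (t * t) + (2 * (v ⬝ᵥ v)) * t + (H *ᵥ v) ⬝ᵥ v := by
      intro t
      rw [← e t]
      exact le_trans (mul_nonneg hκi.le (hdotnn _)) (hHb _).1
    have hd2 := discrim_le_zero hq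
    rw [discrim] at hd2
    have hub : (H *ᵥ v) ⬝ᵥ v ≤ κ * (v ⬝ᵥ v) := (hHb v).2
    have hlb : κ⁻¹ * (v ⬝ᵥ v) ≤ (H *ᵥ v) ⬝ᵥ v := (hHb v).1
    have hqpos : 0 < (H *ᵥ v) ⬝ᵥ v := lt_of_lt_of_le (by positivity) hlb
    have hppos : 0 < v ⬝ᵥ w := by
      by_contra hcon
      push_neg at hcon
      nlinarith [mul_pos hspos hspos, mul_nonneg (neg_nonneg.mpr hcon) hqpos.le]
    have hcomm : (H⁻¹ *ᵥ v) ⬝ᵥ v = v ⬝ᵥ w := by rw [← hw, dotProduct_comm]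
    rw [hcomm]
    have h3 : (v ⬝ᵥ v) * (v ⬝ᵥ v) ≤ ((v ⬝ᵥ w) * κ) * (v ⬝ᵥ v) := by
      nlinarith [mul_le_mul_of_nonneg_left hub hppos.le]
    have h4 : v ⬝ᵥ v ≤ (v ⬝ᵥ w) * κ := le_of_mul_le_mul_right h3 hspos
    have h5 := mul_le_mul_of_nonneg_left h4 hκi.le
    have heq : κ⁻¹ * ((v ⬝ᵥ w) * κ) = v ⬝ᵥ w := by field_simp
    linarith
  have key : ∀ w : V2, κ⁻¹ ^ 2 * (w ⬝ᵥ w) ≤ Real.sqrt H.det * ((H⁻¹ *ᵥ w) ⬝ᵥ w) := by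
    intro w
    calc κ⁻¹ ^ 2 * (w ⬝ᵥ w) = κ⁻¹ * (κ⁻¹ * (w ⬝ᵥ w)) := by ring
      _ ≤ Real.sqrt H.det * ((H⁻¹ *ᵥ w) ⬝ᵥ w) :=
        mul_le_mul hsq (hinvlb w) (mul_nonneg hκi.le (hdotnn w)) (Real.sqrt_nonneg _)
  have hB2 : ∀ i : Fin 2, κ₀⁻¹ ^ 2 * (ξ i ⬝ᵥ ξ i) ≤ (B *ᵥ ξ i) ⬝ᵥ (B *ᵥ ξ i) := by
    intro i
    set v := ξ i with hv
    set u := B *ᵥ v with hu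
    have hcs : (u ⬝ᵥ v) ^ 2 ≤ (u ⬝ᵥ u) * (v ⬝ᵥ v) := by
      simp [dotProduct, Fin.sum_univ_two]
      nlinarith [sq_nonneg (u 0 * v 1 - u 1 * v 0)]
    have hlb : κ₀⁻¹ * (v ⬝ᵥ v) ≤ u ⬝ᵥ v := (hBb v).1
    have hs := hdotnn v
    have hU := hdotnn u
    rcases eq_or_lt_of_le hs with hs0 | hs0
    · have : κ₀⁻¹ ^ 2 * (v ⬝ᵥ v) = 0 := by rw [← hs0]; ring
      rw [this]; exact hU
    · have hκ₀i : (0:ℝ) < κ₀⁻¹ := by positivity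
      nlinarith [mul_nonneg (mul_nonneg hκ₀i.le hs) (sub_nonneg.mpr hlb)]
  have hBB : ∀ i k : Fin 2, ((B * B) *ᵥ ξ i) ⬝ᵥ ξ k = (B *ᵥ ξ i) ⬝ᵥ (B *ᵥ ξ k) := by
    intro i k
    rw [← Matrix.mulVec_mulVec, hsymB (B *ᵥ ξ i) (ξ k)]
  have hrw : ∑ k, ∑ i, Real.sqrt H.det * H⁻¹ k i * (((B * B) *ᵥ ξ i) ⬝ᵥ ξ k)
      = Real.sqrt H.det * ((H⁻¹ *ᵥ (fun j => (B *ᵥ ξ j) 0)) ⬝ᵥ (fun j => (B *ᵥ ξ j) 0))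
        + Real.sqrt H.det * ((H⁻¹ *ᵥ (fun j => (B *ᵥ ξ j) 1)) ⬝ᵥ (fun j => (B *ᵥ ξ j) 1)) := by
    simp only [hBB]
    simp [Matrix.mulVec, dotProduct, Fin.sum_univ_two]
    ring
  rw [hrw]
  have h1 := key (fun j => (B *ᵥ ξ j) 0)
  have h2 := key (fun j => (B *ᵥ ξ j) 1)
  have hsum : ((fun j => (B *ᵥ ξ j) 0) ⬝ᵥ fun j => (B *ᵥ ξ j) 0)
      + ((fun j => (B *ᵥ ξ j) 1) ⬝ᵥ fun j => (B *ᵥ ξ j) 1)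
      = (B *ᵥ ξ 0) ⬝ᵥ (B *ᵥ ξ 0) + (B *ᵥ ξ 1) ⬝ᵥ (B *ᵥ ξ 1) := by
    simp [dotProduct, Fin.sum_univ_two]
    ring
  have hb0 := hB2 0
  have hb1 := hB2 1
  have hκ2 : (0:ℝ) ≤ κ⁻¹ ^ 2 := by positivity
  nlinarith [mul_le_mul_of_nonneg_left (add_le_add hb0 hb1) hκ2]

end
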